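/- For a fixed x in (0, π/2), the function t ↦ cos(x/t)^t is increasing on (1, ∞). -/

import Mathlib

open Real Set

lemma key_pos {u : ℝ} (hu : u ∈ Set.Ioo 0 (Real.pi / 2)) :
    0 < Real.log (Real.cos u) + u * Real.tan u := by
  obtain ⟨hu0, hu2⟩ := hu
  have hcos : 0 < Real.cos u := Real.cos_pos_of_mem_Ioo ⟨by linarith [Real.pi_pos], hu2⟩
  have hsinpos : 0 < Real.sin u := Real.sin_pos_of_pos_of_lt_pi hu0
    (by linarith [Real.pi_gt_d6])
  have hcos1 : Real.cos u < 1 := by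
    nlinarith [Real.sin_sq_add_cos_sq u]
  have hlog : 1 - 1 / Real.cos u < Real.log (Real.cos u) := by
    have h := Real.log_lt_sub_one_of_pos (x := 1 / Real.cos u) (by positivity)
      (by rw [ne_eq, div_eq_one_iff_eq hcos.ne']; linarith)
    rw [Real.log_div one_ne_zero hcos.ne', Real.log_one] at h
    linarith
  have hsin : 2 / Real.pi * u ≤ Real.sin u := Real.mul_le_sin hu0.le hu2.le
  have hcosb : 1 - u ^ 2 / 2 < Real.cos u := Real.one_sub_sq_div_two_lt_cos hu0.ne'
  have hpi : (2:ℝ) < Real.pi := by linarith [Real.pi_gt_d6]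
  have hpipos := Real.pi_pos
  have hkey : 1 - Real.cos u < u * Real.sin u := by
    have h1 : 2 / Real.pi * u * u ≤ u * Real.sin u := by nlinarith
    have h2 : u ^ 2 / 2 < 2 / Real.pi * u * u := by
      have hpi4 : Real.pi < 4 := by linarith [Real.pi_lt_d2]
      rw [div_mul_eq_mul_div, div_mul_eq_mul_div, div_lt_div_iff₀ two_pos hpipos]
      nlinarith
    nlinarith
  rw [Real.tan_eq_sin_div_cos]
  have h1c : 1 - 1 / Real.cos u = -((1 - Real.cos u) / Real.cos u) := by field_simp; ring
  rw [h1c] at hlog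
  have h3 : (1 - Real.cos u) / Real.cos u < u * Real.sin u / Real.cos u :=
    (div_lt_div_iff_of_pos_right hcos).mpr hkey
  linarith [mul_div_assoc u (Real.sin u) (Real.cos u)]

theorem stmt_9 (x : ℝ) (hx : x ∈ Set.Ioo 0 (Real.pi / 2)) :
    StrictMonoOn (fun t : ℝ => Real.cos (x / t) ^ t) (Set.Ioi 1) := by
  obtain ⟨hx0, hx2⟩ := hx
  have hmem : ∀ t : ℝ, t ∈ Set.Ioi (1:ℝ) → x / t ∈ Set.Ioo 0 (Real.pi / 2) := by
    intro t ht
    have ht1 : (1:ℝ) < t := ht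
    refine ⟨by positivity, ?_⟩
    have : x / t < x := by
      rw [div_lt_iff₀ (by linarith)]; nlinarith
    linarith
  set g : ℝ → ℝ := fun t => t * Real.log (Real.cos (x / t)) with hg
  have hd : ∀ t ∈ Set.Ioi (1:ℝ), HasDerivAt g
      (Real.log (Real.cos (x / t)) + (x / t) * Real.tan (x / t)) t := by
    intro t ht
    have ht1 : (1:ℝ) < t := ht
    have ht0 : t ≠ 0 := by linarith
    have hu := hmem t ht
    have hcos : 0 < Real.cos (x / t) := Real.cos_pos_of_mem_Ioo
      ⟨by linarith [Real.pi_pos, hu.1], hu.2⟩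
    have h1 : HasDerivAt (fun y : ℝ => x / y) (x * -(t ^ 2)⁻¹) t := by
      simpa [div_eq_mul_inv] using (hasDerivAt_inv ht0).const_mul x
    have h3 : HasDerivAt (fun y : ℝ => Real.cos (x / y))
        (-Real.sin (x / t) * (x * -(t ^ 2)⁻¹)) t :=
      (Real.hasDerivAt_cos (x / t)).comp t h1
    have h4 : HasDerivAt (fun y : ℝ => Real.log (Real.cos (x / y)))
        ((Real.cos (x / t))⁻¹ * (-Real.sin (x / t) * (x * -(t ^ 2)⁻¹))) t :=
      by have := (Real.hasDerivAt_log hcos.ne').comp t h3; exact this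
    have h5 : HasDerivAt (fun y : ℝ => y * Real.log (Real.cos (x / y))) (1 * Real.log (Real.cos (x / t)) + t * ((Real.cos (x / t))⁻¹ * (-Real.sin (x / t) * (x * -(t ^ 2)⁻¹)))) t :=
      (hasDerivAt_id t).mul h4
    convert h5 using 1
    rw [Real.tan_eq_sin_div_cos]
    field_simp
  have hgmono : StrictMonoOn g (Set.Ioi 1) := by
    apply strictMonoOn_of_deriv_pos (convex_Ioi 1)
    · intro t ht
      exact (hd t ht).differentiableAt.continuousAt.continuousWithinAt
    · intro t ht
      rw [interior_Ioi] at ht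
      rw [(hd t ht).deriv]
      exact key_pos (hmem t ht)
  intro a ha b hb hab
  have hca : 0 < Real.cos (x / a) := Real.cos_pos_of_mem_Ioo
    ⟨by linarith [Real.pi_pos, (hmem a ha).1], (hmem a ha).2⟩
  have hcb : 0 < Real.cos (x / b) := Real.cos_pos_of_mem_Ioo
    ⟨by linarith [Real.pi_pos, (hmem b hb).1], (hmem b hb).2⟩
  simp only [Real.rpow_def_of_pos hca, Real.rpow_def_of_pos hcb]
  exact Real.exp_lt_exp.mpr (by
    have := hgmono ha hb hab
    simp only [hg] at this
    linarith [mul_comm a (Real.log (Real.cos (x / a))), mul_comm b (Real.log (Real.cos (x / b)))])
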